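/- arXiv:1603.03472 — 4 statements merged into one kernel-verified Lean document; each statement's English description precedes it below -/
import Mathlib

section
/- For every f : X → L: the lower envelope of f over the class of all 𝔥-homogeneous functions X → L and the lower envelope of f over the class of all lower 𝔥-semihomogeneous functions X → L are both lower 𝔥-semihomogeneous; dually, the upper envelope of f over the class of all 𝔥-homogeneous functions and the upper envelope of f over the class of all upper 𝔥-semihomogeneous functions are both upper 𝔥-semihomogeneous. (Corollary 1, semihomogeneous part.) -/
/-- `f : X → L` is `𝔥`-homogeneous: `f (h • x) = 𝔥 h • f x`. -/
def IsHomog {H T X L : Type*} [Monoid H] [Monoid T] [MulAction H X]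
    [SMul T L] (𝔥 : H →* T) (f : X → L) : Prop :=
  ∀ (h : H) (x : X), f (h • x) = 𝔥 h • f x

/-- `f : X → L` is lower `𝔥`-semihomogeneous: `f (h • x) ≤ 𝔥 h • f x`. -/
def IsLowerSemihomog {H T X L : Type*} [Monoid H] [Monoid T] [MulAction H X]
    [SMul T L] [LE L] (𝔥 : H →* T) (f : X → L) : Prop :=
  ∀ (h : H) (x : X), f (h • x) ≤ 𝔥 h • f x

/-- `f : X → L` is upper `𝔥`-semihomogeneous: `𝔥 h • f x ≤ f (h • x)`. -/
def IsUpperSemihomog {H T X L : Type*} [Monoid H] [Monoid T] [MulAction H X]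
    [SMul T L] [LE L] (𝔥 : H →* T) (f : X → L) : Prop :=
  ∀ (h : H) (x : X), 𝔥 h • f x ≤ f (h • x)

/-- The lower `Φ`-envelope `lE_Φ f : x ↦ ⨆ {φ x | φ ∈ Φ, φ ≤ f}`. -/
def lowE {X L : Type*} [CompleteLattice L] (Φ : Set (X → L)) (f : X → L) : X → L :=
  fun x => ⨆ φ ∈ {φ ∈ Φ | φ ≤ f}, φ x

/-- The upper `Φ`-envelope `uE_Φ f : x ↦ ⨅ {φ x | φ ∈ Φ, f ≤ φ}`. -/
def uppE {X L : Type*} [CompleteLattice L] (Φ : Set (X → L)) (f : X → L) : X → L :=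
  fun x => ⨅ φ ∈ {φ ∈ Φ | f ≤ φ}, φ x

/-- **Corollary 1, semihomogeneous part.** Lower envelopes over the classes of
`𝔥`-homogeneous and of lower `𝔥`-semihomogeneous functions are lower
`𝔥`-semihomogeneous; dually, upper envelopes over the classes of
`𝔥`-homogeneous and of upper `𝔥`-semihomogeneous functions are upper
`𝔥`-semihomogeneous. -/
theorem cor1_semihomog {H T X L : Type*} [Monoid H] [Monoid T] [MulAction H X]
    [CompleteLattice L] [MulAction T L] (𝔥 : H →* T)
    (hmono : ∀ (t : T) (s₁ s₂ : L), s₁ ≤ s₂ → t • s₁ ≤ t • s₂)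
    (f : X → L) :
    IsLowerSemihomog 𝔥 (lowE {φ | IsHomog 𝔥 φ} f) ∧
    IsLowerSemihomog 𝔥 (lowE {φ | IsLowerSemihomog 𝔥 φ} f) ∧
    IsUpperSemihomog 𝔥 (uppE {φ | IsHomog 𝔥 φ} f) ∧
    IsUpperSemihomog 𝔥 (uppE {φ | IsUpperSemihomog 𝔥 φ} f) := by
  refine ⟨?_, ?_, ?_, ?_⟩
  · intro h x
    refine iSup₂_le fun φ hφ => ?_
    rw [hφ.1 h x]
    exact hmono _ _ _ (le_iSup₂ (f := fun φ (_ : φ ∈ {φ | IsHomog 𝔥 φ} ∧ φ ≤ f) => φ x) φ hφ)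
  · intro h x
    refine iSup₂_le fun φ hφ => ?_
    exact (hφ.1 h x).trans (hmono _ _ _
      (le_iSup₂ (f := fun φ (_ : φ ∈ {φ | IsLowerSemihomog 𝔥 φ} ∧ φ ≤ f) => φ x) φ hφ))
  · intro h x
    refine le_iInf₂ fun φ hφ => ?_
    rw [hφ.1 h x]
    exact hmono _ _ _ (iInf₂_le (f := fun φ (_ : φ ∈ {φ | IsHomog 𝔥 φ} ∧ f ≤ φ) => φ x) φ hφ)
  · intro h x
    refine le_iInf₂ fun φ hφ => ?_
    exact (hmono _ _ _
      (iInf₂_le (f := fun φ (_ : φ ∈ {φ | IsUpperSemihomog 𝔥 φ} ∧ f ≤ φ) => φ x) φ hφ)).trans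
      (hφ.1 h x)
end

section
/- Suppose T is a group and let Φ be the class of all 𝔥-homogeneous functions X → L. Then for every f : X → L, both the lower Φ-envelope lE_Φ f and the upper Φ-envelope uE_Φ f are 𝔥-homogeneous. (Corollary 1, group part.) -/
/-- The order isomorphism of `L` given by scalar multiplication by `t`. -/
def smulIso {T L : Type*} [Group T] [CompleteLattice L] [MulAction T L]
    (hmono : ∀ (t : T) (s₁ s₂ : L), s₁ ≤ s₂ → t • s₁ ≤ t • s₂) (t : T) : L ≃o L :=
  (MulAction.toPerm t).toOrderIso (fun _ _ h => hmono t _ _ h)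
    (fun _ _ h => hmono t⁻¹ _ _ h)

theorem smul_iSup' {T L ι : Type*} [Group T] [CompleteLattice L] [MulAction T L]
    (hmono : ∀ (t : T) (s₁ s₂ : L), s₁ ≤ s₂ → t • s₁ ≤ t • s₂) (t : T) (g : ι → L) :
    t • ⨆ i, g i = ⨆ i, t • g i :=
  (smulIso hmono t).map_iSup g

theorem smul_iInf' {T L ι : Type*} [Group T] [CompleteLattice L] [MulAction T L]
    (hmono : ∀ (t : T) (s₁ s₂ : L), s₁ ≤ s₂ → t • s₁ ≤ t • s₂) (t : T) (g : ι → L) :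
    t • ⨅ i, g i = ⨅ i, t • g i :=
  (smulIso hmono t).map_iInf g

/-- **Corollary 1, group part.** If `T` is a group and `Φ` is the class of all
`𝔥`-homogeneous functions, then both envelopes `lE_Φ f` and `uE_Φ f` are
`𝔥`-homogeneous. -/
theorem cor1_group {H T X L : Type*} [Monoid H] [Group T] [MulAction H X]
    [CompleteLattice L] [MulAction T L] (𝔥 : H →* T)
    (hmono : ∀ (t : T) (s₁ s₂ : L), s₁ ≤ s₂ → t • s₁ ≤ t • s₂)
    (f : X → L) :
    IsHomog 𝔥 (lowE {φ | IsHomog 𝔥 φ} f) ∧ IsHomog 𝔥 (uppE {φ | IsHomog 𝔥 φ} f) := by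
  constructor
  · intro h x
    unfold lowE
    rw [iSup_subtype', iSup_subtype', smul_iSup' hmono]
    refine iSup_congr fun ⟨φ, hφ, hle⟩ => ?_
    exact hφ h x
  · intro h x
    unfold uppE
    rw [iInf_subtype', iInf_subtype', smul_iInf' hmono]
    refine iInf_congr fun ⟨φ, hφ, hle⟩ => ?_
    exact hφ h x
end

section
/- Suppose T is a group and let Φ be the class of all 𝔥-homogeneous functions X → L. Then for every f : X → L the following three statements are equivalent: (1) f is 𝔥-homogeneous; (2) the lower Φ-envelope lE_Φ f equals f; (3) the upper Φ-envelope uE_Φ f equals f. (Theorem 1, group part.) -/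
section Aux
variable {T L : Type*} [Group T] [CompleteLattice L] [MulAction T L]

lemma smul_le_iff_aux (hmono : ∀ (t : T) (s₁ s₂ : L), s₁ ≤ s₂ → t • s₁ ≤ t • s₂)
    (t : T) (a b : L) : t • a ≤ b ↔ a ≤ t⁻¹ • b := by
  constructor
  · intro h; have := hmono t⁻¹ _ _ h; simpa using this
  · intro h; have := hmono t _ _ h; simpa using this

lemma le_smul_iff_aux (hmono : ∀ (t : T) (s₁ s₂ : L), s₁ ≤ s₂ → t • s₁ ≤ t • s₂)
    (t : T) (a b : L) : a ≤ t • b ↔ t⁻¹ • a ≤ b := by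
  constructor
  · intro h; have := hmono t⁻¹ _ _ h; simpa using this
  · intro h; have := hmono t _ _ h; simpa using this

lemma smul_iSup_aux (hmono : ∀ (t : T) (s₁ s₂ : L), s₁ ≤ s₂ → t • s₁ ≤ t • s₂)
    {ι : Sort*} (t : T) (g : ι → L) : t • (⨆ i, g i) = ⨆ i, t • g i := by
  apply le_antisymm
  · rw [smul_le_iff_aux hmono]
    apply iSup_le
    intro i
    rw [← smul_le_iff_aux hmono]
    exact le_iSup (fun i => t • g i) i
  · exact iSup_le fun i => hmono t _ _ (le_iSup g i)

lemma smul_iInf_aux (hmono : ∀ (t : T) (s₁ s₂ : L), s₁ ≤ s₂ → t • s₁ ≤ t • s₂)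
    {ι : Sort*} (t : T) (g : ι → L) : t • (⨅ i, g i) = ⨅ i, t • g i := by
  apply le_antisymm
  · exact le_iInf fun i => hmono t _ _ (iInf_le g i)
  · rw [le_smul_iff_aux hmono]
    apply le_iInf
    intro i
    rw [← le_smul_iff_aux hmono]
    exact iInf_le (fun i => t • g i) i

end Aux

/-- **Theorem 1, group part.** If `T` is a group and `Φ` is the class of all
`𝔥`-homogeneous functions, then for every `f : X → L` the following are
equivalent: (1) `f` is `𝔥`-homogeneous; (2) `lE_Φ f = f`; (3) `uE_Φ f = f`. -/
theorem thm1_group {H T X L : Type*} [Monoid H] [Group T] [MulAction H X]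
    [CompleteLattice L] [MulAction T L] (𝔥 : H →* T)
    (hmono : ∀ (t : T) (s₁ s₂ : L), s₁ ≤ s₂ → t • s₁ ≤ t • s₂)
    (f : X → L) :
    List.TFAE [IsHomog 𝔥 f,
               lowE {φ | IsHomog 𝔥 φ} f = f,
               uppE {φ | IsHomog 𝔥 φ} f = f] := by
  set Φ : Set (X → L) := {φ | IsHomog 𝔥 φ} with hΦ
  have hlow : IsHomog 𝔥 (lowE Φ f) := by
    intro h x
    unfold lowE
    rw [iSup_subtype', iSup_subtype', smul_iSup_aux hmono]
    exact iSup_congr fun ⟨φ, hφ, _⟩ => hφ h x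
  have hupp : IsHomog 𝔥 (uppE Φ f) := by
    intro h x
    unfold uppE
    rw [iInf_subtype', iInf_subtype', smul_iInf_aux hmono]
    exact iInf_congr fun ⟨φ, hφ, _⟩ => hφ h x
  tfae_have 1 → 2
  | hf => by
    funext x
    apply le_antisymm
    · exact iSup₂_le fun φ hφ => hφ.2 x
    · exact le_iSup₂_of_le f ⟨hf, le_refl f⟩ le_rfl
  tfae_have 2 → 1
  | hf => hf ▸ hlow
  tfae_have 1 → 3
  | hf => by
    funext x
    apply le_antisymm
    · exact iInf₂_le_of_le f ⟨hf, le_refl f⟩ le_rfl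
    · exact le_iInf₂ fun φ hφ => hφ.2 x
  tfae_have 3 → 1
  | hf => hf ▸ hupp
  tfae_finish
end

section
/- Let Φ be the class of all 𝔥-homogeneous functions X → L. Then for every f : X → L one has lE_Φ f = f∧ ≤ f ≤ f∨ = uE_Φ f pointwise. (Theorem 3, part I.) -/
/-- The regularized minorant `f∧(x) := ⨅ h, (𝔥 h)⁻¹ • f (h • x)`. -/
def regMin {H T X L : Type*} [Monoid H] [Group T] [MulAction H X]
    [CompleteLattice L] [MulAction T L] (𝔥 : H →* T) (f : X → L) : X → L :=
  fun x => ⨅ h : H, (𝔥 h)⁻¹ • f (h • x)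

/-- The regularized majorant `f∨(x) := ⨆ h, (𝔥 h)⁻¹ • f (h • x)`. -/
def regMaj {H T X L : Type*} [Monoid H] [Group T] [MulAction H X]
    [CompleteLattice L] [MulAction T L] (𝔥 : H →* T) (f : X → L) : X → L :=
  fun x => ⨆ h : H, (𝔥 h)⁻¹ • f (h • x)

section aux
variable {T L : Type*} [Group T] [CompleteLattice L] [MulAction T L]
variable (hmono : ∀ (t : T) (s₁ s₂ : L), s₁ ≤ s₂ → t • s₁ ≤ t • s₂)

include hmono

theorem smul_iInf'_s15 {ι : Sort*} (t : T) (g : ι → L) :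
    t • ⨅ i, g i = ⨅ i, t • g i := by
  refine le_antisymm (le_iInf fun i => hmono t _ _ (iInf_le _ i)) ?_
  have h1 : t⁻¹ • ⨅ i, t • g i ≤ ⨅ i, g i := by
    refine le_iInf fun i => ?_
    have := hmono t⁻¹ _ _ (iInf_le (fun i => t • g i) i)
    simpa using this
  have := hmono t _ _ h1
  simpa using this

theorem smul_iSup'_s15 {ι : Sort*} (t : T) (g : ι → L) :
    t • ⨆ i, g i = ⨆ i, t • g i := by
  refine le_antisymm ?_ (iSup_le fun i => hmono t _ _ (le_iSup _ i))
  have h1 : ⨆ i, g i ≤ t⁻¹ • ⨆ i, t • g i := by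
    refine iSup_le fun i => ?_
    have := hmono t⁻¹ _ _ (le_iSup (fun i => t • g i) i)
    simpa using this
  have := hmono t _ _ h1
  simpa using this

end aux

/-- **Theorem 3, part I.** For the class `Φ` of all `𝔥`-homogeneous functions,
`lE_Φ f = f∧ ≤ f ≤ f∨ = uE_Φ f` pointwise. -/
theorem thm3_I {H T X L : Type*} [Group H] [Group T] [MulAction H X]
    [CompleteLattice L] [MulAction T L] (𝔥 : H →* T)
    (hmono : ∀ (t : T) (s₁ s₂ : L), s₁ ≤ s₂ → t • s₁ ≤ t • s₂)
    (f : X → L) :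
    lowE {φ | IsHomog 𝔥 φ} f = regMin 𝔥 f ∧ regMin 𝔥 f ≤ f ∧ f ≤ regMaj 𝔥 f ∧
      regMaj 𝔥 f = uppE {φ | IsHomog 𝔥 φ} f := by
  -- regMin ≤ f
  have hMinLe : regMin 𝔥 f ≤ f := fun x => by
    have := iInf_le (fun h : H => (𝔥 h)⁻¹ • f (h • x)) 1
    simpa [regMin] using this
  -- f ≤ regMaj
  have hLeMaj : f ≤ regMaj 𝔥 f := fun x => by
    have := le_iSup (fun h : H => (𝔥 h)⁻¹ • f (h • x)) 1
    simpa [regMaj] using this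
  -- regMin is homogeneous
  have hMinHomog : IsHomog 𝔥 (regMin 𝔥 f) := by
    intro h x
    calc regMin 𝔥 f (h • x) = ⨅ k : H, (𝔥 k)⁻¹ • f (k • h • x) := rfl
      _ = ⨅ j : H, (𝔥 (j * h⁻¹))⁻¹ • f ((j * h⁻¹) • h • x) :=
          (Equiv.iInf_comp (g := fun k => (𝔥 k)⁻¹ • f (k • h • x))
            (Equiv.mulRight h⁻¹)).symm
      _ = ⨅ j : H, 𝔥 h • (𝔥 j)⁻¹ • f (j • x) := by
          refine iInf_congr fun j => ?_
          rw [map_mul, map_inv, mul_inv_rev, inv_inv, mul_smul (𝔥 h),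
            mul_smul j h⁻¹, inv_smul_smul]
      _ = 𝔥 h • regMin 𝔥 f x :=
          (smul_iInf'_s15 hmono (𝔥 h) fun j : H => (𝔥 j)⁻¹ • f (j • x)).symm
  -- regMaj is homogeneous
  have hMajHomog : IsHomog 𝔥 (regMaj 𝔥 f) := by
    intro h x
    calc regMaj 𝔥 f (h • x) = ⨆ k : H, (𝔥 k)⁻¹ • f (k • h • x) := rfl
      _ = ⨆ j : H, (𝔥 (j * h⁻¹))⁻¹ • f ((j * h⁻¹) • h • x) :=
          (Equiv.iSup_comp (g := fun k => (𝔥 k)⁻¹ • f (k • h • x))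
            (Equiv.mulRight h⁻¹)).symm
      _ = ⨆ j : H, 𝔥 h • (𝔥 j)⁻¹ • f (j • x) := by
          refine iSup_congr fun j => ?_
          rw [map_mul, map_inv, mul_inv_rev, inv_inv, mul_smul (𝔥 h),
            mul_smul j h⁻¹, inv_smul_smul]
      _ = 𝔥 h • regMaj 𝔥 f x :=
          (smul_iSup'_s15 hmono (𝔥 h) fun j : H => (𝔥 j)⁻¹ • f (j • x)).symm
  refine ⟨?_, hMinLe, hLeMaj, ?_⟩
  · funext x
    refine le_antisymm ?_ ?_
    · refine iSup₂_le fun φ hφ => ?_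
      obtain ⟨hφH, hφle⟩ := hφ
      refine le_iInf fun h => ?_
      have h1 : (𝔥 h)⁻¹ • φ (h • x) ≤ (𝔥 h)⁻¹ • f (h • x) :=
        hmono _ _ _ (hφle (h • x))
      rwa [hφH h x, inv_smul_smul] at h1
    · exact le_iSup₂_of_le (regMin 𝔥 f) ⟨hMinHomog, hMinLe⟩ le_rfl
  · funext x
    refine le_antisymm ?_ ?_
    · refine le_iInf₂ fun φ hφ => ?_
      obtain ⟨hφH, hφle⟩ := hφ
      refine iSup_le fun h => ?_
      have h1 : (𝔥 h)⁻¹ • f (h • x) ≤ (𝔥 h)⁻¹ • φ (h • x) :=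
        hmono _ _ _ (hφle (h • x))
      rwa [hφH h x, inv_smul_smul] at h1
    · refine iInf₂_le_of_le (regMaj 𝔥 f) ?_ le_rfl
      exact ⟨hMajHomog, hLeMaj⟩
end
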